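/- arXiv:2103.13010 — 8 statements merged into one kernel-verified Lean document; each statement's English description precedes it below -/
import Mathlib

section
/- Let U = { dbar in R^N : dbar_j = d_j + b_j v_j for some v with sum_j |v_j| <= Gamma and |v_j| <= 1 for all j }. Then for binary x : N -> {0,1}, the condition 'sum_j dbar_j x_j <= s for all dbar in U' is equivalent to 'sum_j d_j x_j + max over subsets R of N with |R| <= Gamma of sum_{j in R} b_j x_j <= s'. -/
open Finset

/-- Worst-case (cardinality-constrained) extra term. -/
noncomputable def robustMax {ι : Type*} [DecidableEq ι] (N : Finset ι) (Γ : ℕ) (f : ι → ℝ) : ℝ :=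
  (N.powerset.filter fun R => R.card ≤ Γ).sup' ⟨∅, by simp⟩ fun R => ∑ j ∈ R, f j

lemma empty_mem_filter {ι : Type*} [DecidableEq ι] (N : Finset ι) (Γ : ℕ) :
    ∅ ∈ N.powerset.filter fun R => R.card ≤ Γ := by simp

lemma robustMax_nonneg {ι : Type*} [DecidableEq ι] (N : Finset ι) (Γ : ℕ) (f : ι → ℝ) :
    0 ≤ robustMax N Γ f := by
  have := Finset.le_sup' (fun R => ∑ j ∈ R, f j) (empty_mem_filter N Γ)
  simpa [robustMax] using this

lemma le_robustMax {ι : Type*} [DecidableEq ι] {N R : Finset ι} {Γ : ℕ} (f : ι → ℝ)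
    (hR : R ⊆ N) (hc : R.card ≤ Γ) : ∑ j ∈ R, f j ≤ robustMax N Γ f := by
  exact Finset.le_sup' (fun R => ∑ j ∈ R, f j)
    (by simp [Finset.mem_filter, Finset.mem_powerset, hR, hc])

lemma insert_robustMax {ι : Type*} [DecidableEq ι] {N : Finset ι} {Γ' : ℕ} (f : ι → ℝ)
    {j0 : ι} (hj0 : j0 ∈ N) :
    f j0 + robustMax (N.erase j0) Γ' f ≤ robustMax N (Γ' + 1) f := by
  unfold robustMax
  rw [add_comm, ← le_sub_iff_add_le]
  apply Finset.sup'_le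
  intro R hR
  rw [le_sub_iff_add_le]
  rw [Finset.mem_filter, Finset.mem_powerset] at hR
  have hj0R : j0 ∉ R := fun h => (Finset.mem_erase.mp (hR.1 h)).1 rfl
  have hsub : insert j0 R ⊆ N := by
    intro a ha
    rcases Finset.mem_insert.mp ha with h | h
    · exact h ▸ hj0
    · exact (Finset.mem_erase.mp (hR.1 h)).2
  have hcard : (insert j0 R).card ≤ Γ' + 1 := by
    rw [Finset.card_insert_of_notMem hj0R]
    omega
  have := Finset.le_sup' (fun R => ∑ j ∈ R, f j)
    (by simp [Finset.mem_filter, Finset.mem_powerset, hsub, hcard] :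
      insert j0 R ∈ N.powerset.filter fun R => R.card ≤ Γ' + 1)
  calc ∑ j ∈ R, f j + f j0 = ∑ j ∈ insert j0 R, f j := by
        rw [Finset.sum_insert hj0R]; ring
    _ ≤ _ := this

lemma key_lemma {ι : Type*} [DecidableEq ι] (N : Finset ι) :
    ∀ (Γ : ℕ) (c lam : ι → ℝ),
    (∀ j ∈ N, 0 ≤ c j) → (∀ j ∈ N, 0 ≤ lam j) → (∀ j ∈ N, lam j ≤ 1) →
    ∑ j ∈ N, lam j ≤ (Γ : ℝ) →
    ∑ j ∈ N, lam j * c j ≤ robustMax N Γ c := by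
  induction N using Finset.strongInduction with
  | _ N ih =>
    intro Γ c lam hc hlam0 hlam1 hsum
    rcases N.eq_empty_or_nonempty with rfl | hne
    · simpa using robustMax_nonneg (∅ : Finset ι) Γ c
    obtain ⟨j0, hj0, hj0max⟩ := Finset.exists_max_image N c hne
    cases Γ with
    | zero =>
      have hz : ∀ j ∈ N, lam j = 0 := by
        have := (Finset.sum_eq_zero_iff_of_nonneg hlam0).mp
          (le_antisymm (by simpa using hsum) (Finset.sum_nonneg hlam0))
        exact this
      have : ∑ j ∈ N, lam j * c j = 0 :=
        Finset.sum_eq_zero fun j hj => by rw [hz j hj, zero_mul]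
      rw [this]; exact robustMax_nonneg N 0 c
    | succ Γ' =>
      set N' := N.erase j0 with hN'
      have hss : N' ⊂ N := Finset.erase_ssubset hj0
      have hsplit : ∑ j ∈ N, lam j * c j = lam j0 * c j0 + ∑ j ∈ N', lam j * c j := by
        rw [← Finset.add_sum_erase N _ hj0]
      have hsplit2 : ∑ j ∈ N, lam j = lam j0 + ∑ j ∈ N', lam j := by
        rw [← Finset.add_sum_erase N _ hj0]
      have hmemN' : ∀ j ∈ N', j ∈ N := fun j hj => Finset.mem_of_mem_erase hj
      have hcj0 : 0 ≤ c j0 := hc j0 hj0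
      set T := ∑ j ∈ N', lam j with hT
      by_cases hTle : T ≤ (Γ' : ℝ)
      · have h1 := ih N' hss Γ' c lam (fun j hj => hc j (hmemN' j hj))
          (fun j hj => hlam0 j (hmemN' j hj)) (fun j hj => hlam1 j (hmemN' j hj)) hTle
        have := insert_robustMax c hj0 (Γ' := Γ')
        have h2' : lam j0 * c j0 ≤ c j0 := by
          nlinarith [hlam1 j0 hj0, hlam0 j0 hj0]
        linarith [hsplit]
      · push_neg at hTle
        have hTpos : (0 : ℝ) < T := lt_of_le_of_lt (Nat.cast_nonneg Γ') hTle
        set μ := fun j => lam j * ((Γ' : ℝ) / T) with hμ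
        have hratio0 : (0 : ℝ) ≤ (Γ' : ℝ) / T := div_nonneg (Nat.cast_nonneg _) hTpos.le
        have hratio1 : (Γ' : ℝ) / T ≤ 1 := by
          rw [div_le_one hTpos]; exact hTle.le
        have hμsum : ∑ j ∈ N', μ j = (Γ' : ℝ) := by
          rw [hμ, ← Finset.sum_mul, ← hT, mul_comm, div_mul_cancel₀ _ (ne_of_gt hTpos)]
        have h1 := ih N' hss Γ' c μ (fun j hj => hc j (hmemN' j hj))
          (fun j hj => mul_nonneg (hlam0 j (hmemN' j hj)) hratio0)
          (fun j hj => by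
            have h1 := hlam1 j (hmemN' j hj); have h0 := hlam0 j (hmemN' j hj)
            show lam j * ((Γ' : ℝ) / T) ≤ 1
            nlinarith [hratio0, hratio1])
          (le_of_eq hμsum)
        -- ∑_{N'} (lam - μ) c ≤ (T - Γ') * c j0
        have hdiff : ∑ j ∈ N', lam j * c j - ∑ j ∈ N', μ j * c j ≤ (T - (Γ' : ℝ)) * c j0 := by
          rw [← Finset.sum_sub_distrib]
          have : ∀ j ∈ N', lam j * c j - μ j * c j ≤ (lam j - μ j) * c j0 := by
            intro j hj
            have h1 : lam j * c j - μ j * c j = (lam j - μ j) * c j := by ring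
            rw [h1]
            apply mul_le_mul_of_nonneg_left (hj0max j (hmemN' j hj))
            have h0 := hlam0 j (hmemN' j hj)
            show 0 ≤ lam j - lam j * ((Γ' : ℝ) / T)
            nlinarith [hratio0, hratio1]
          calc ∑ j ∈ N', (lam j * c j - μ j * c j) ≤ ∑ j ∈ N', (lam j - μ j) * c j0 :=
                Finset.sum_le_sum this
            _ = (T - (Γ' : ℝ)) * c j0 := by
                rw [← Finset.sum_mul, Finset.sum_sub_distrib, ← hT, hμsum]
        have hTbound : T - (Γ' : ℝ) ≤ 1 - lam j0 := by
          have : lam j0 + T ≤ (Γ' : ℝ) + 1 := by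
            rw [← hsplit2]; push_cast at hsum ⊢; linarith
          linarith
        have hins := insert_robustMax c hj0 (Γ' := Γ')
        have hmono : (T - (Γ' : ℝ)) * c j0 ≤ (1 - lam j0) * c j0 :=
          mul_le_mul_of_nonneg_right hTbound hcj0
        linarith [hsplit]

/-- The Bertsimas–Sim uncertainty set condition is equivalent to the
cardinality-constrained worst-case constraint. -/
theorem stmt1 {ι : Type*} [DecidableEq ι] (N : Finset ι) (d b : ι → ℝ)
    (hd : ∀ j ∈ N, 0 ≤ d j) (hb : ∀ j ∈ N, 0 ≤ b j)
    (Γ : ℕ) (s : ℝ) (x : ι → ℝ) (hx : ∀ j ∈ N, x j = 0 ∨ x j = 1) :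
    (∀ dbar : ι → ℝ,
        (∃ v : ι → ℝ, (∀ j ∈ N, |v j| ≤ 1) ∧ ∑ j ∈ N, |v j| ≤ (Γ : ℝ) ∧
          ∀ j ∈ N, dbar j = d j + b j * v j) →
        ∑ j ∈ N, dbar j * x j ≤ s) ↔
      ∑ j ∈ N, d j * x j + robustMax N Γ (fun j => b j * x j) ≤ s := by
  constructor
  · intro h
    obtain ⟨R₀, hR₀, hRmax⟩ := Finset.exists_mem_eq_sup'
      (⟨∅, empty_mem_filter N Γ⟩ : (N.powerset.filter fun R => R.card ≤ Γ).Nonempty)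
      (fun R => ∑ j ∈ R, b j * x j)
    rw [Finset.mem_filter, Finset.mem_powerset] at hR₀
    set v : ι → ℝ := fun j => if j ∈ R₀ then 1 else 0 with hv
    have key := h (fun j => d j + b j * v j) ⟨v, ?_, ?_, fun j _ => rfl⟩
    · have heq : ∑ j ∈ N, (d j + b j * v j) * x j
          = ∑ j ∈ N, d j * x j + ∑ j ∈ R₀, b j * x j := by
        have h1 : ∀ j ∈ N, (d j + b j * v j) * x j
            = d j * x j + (if j ∈ R₀ then b j * x j else 0) := by
          intro j hj
          by_cases hjR : j ∈ R₀
          · simp only [hv, if_pos hjR]; ring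
          · simp only [hv, if_neg hjR]; ring
        calc ∑ j ∈ N, (d j + b j * v j) * x j
            = ∑ j ∈ N, (d j * x j + (if j ∈ R₀ then b j * x j else 0)) :=
              Finset.sum_congr rfl h1
          _ = ∑ j ∈ N, d j * x j + ∑ j ∈ N, (if j ∈ R₀ then b j * x j else 0) :=
              Finset.sum_add_distrib
          _ = ∑ j ∈ N, d j * x j + ∑ j ∈ R₀, b j * x j := by
              rw [Finset.sum_ite_mem, Finset.inter_eq_right.mpr hR₀.1]
      rw [heq] at key
      have : robustMax N Γ (fun j => b j * x j) = ∑ j ∈ R₀, b j * x j := hRmax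
      rw [this]; exact key
    · intro j _
      by_cases hjR : j ∈ R₀ <;> simp [hv, hjR]
    · have : ∀ j ∈ N, |v j| = if j ∈ R₀ then (1:ℝ) else 0 := by
        intro j _; by_cases hjR : j ∈ R₀ <;> simp [hv, hjR]
      rw [Finset.sum_congr rfl this, Finset.sum_ite_mem, Finset.inter_eq_right.mpr hR₀.1]
      simp
      exact_mod_cast hR₀.2
  · intro h dbar ⟨v, hv1, hvsum, hvd⟩
    have hsplit : ∑ j ∈ N, dbar j * x j
        = ∑ j ∈ N, d j * x j + ∑ j ∈ N, v j * (b j * x j) := by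
      rw [← Finset.sum_add_distrib]
      apply Finset.sum_congr rfl
      intro j hj
      rw [hvd j hj]; ring
    have hcx : ∀ j ∈ N, 0 ≤ b j * x j := by
      intro j hj
      rcases hx j hj with h0 | h1
      · simp [h0]
      · simp [h1]; exact hb j hj
    have hbound : ∑ j ∈ N, v j * (b j * x j) ≤ robustMax N Γ (fun j => b j * x j) := by
      have step : ∑ j ∈ N, v j * (b j * x j) ≤ ∑ j ∈ N, |v j| * (b j * x j) :=
        Finset.sum_le_sum fun j hj =>
          mul_le_mul_of_nonneg_right (le_abs_self _) (hcx j hj)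
      exact step.trans (key_lemma N Γ (fun j => b j * x j) (fun j => |v j|)
        hcx (fun j _ => abs_nonneg _) hv1 hvsum)
    linarith [hsplit]
end

section
/- For binary x : N -> {0,1}, nonnegative b_j, and nonnegative integer Gamma, the value max over subsets R of N with |R| <= Gamma of sum_{j in R} b_j x_j equals the optimal value of the linear program: minimize Gamma*q + sum_j p_j subject to q + p_j >= b_j x_j for all j, p_j >= 0, q >= 0. -/
open Finset

lemma exists_top {ι : Type*} [DecidableEq ι] (c : ι → ℝ) :
    ∀ (Γ : ℕ) (N : Finset ι), Γ ≤ N.card →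
      ∃ T ⊆ N, T.card = Γ ∧ ∀ i ∈ T, ∀ j ∈ N, j ∉ T → c j ≤ c i := by
  intro Γ
  induction Γ with
  | zero => intro N _; exact ⟨∅, empty_subset _, rfl, by simp⟩
  | succ n ih =>
    intro N hΓ
    have hN : N.Nonempty := card_pos.mp (lt_of_lt_of_le (Nat.succ_pos n) hΓ)
    obtain ⟨m, hm, hmax⟩ := N.exists_max_image c hN
    obtain ⟨T', hT'sub, hT'card, hT'⟩ := ih (N.erase m)
      (by rw [card_erase_of_mem hm]; omega)
    have hmT' : m ∉ T' := fun h => (mem_erase.mp (hT'sub h)).1 rfl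
    refine ⟨insert m T', ?_, ?_, ?_⟩
    · exact insert_subset hm (hT'sub.trans (erase_subset _ _))
    · rw [card_insert_of_notMem hmT', hT'card]
    · intro i hi j hj hjT
      rcases mem_insert.mp hi with rfl | hi'
      · exact hmax j hj
      · exact hT' i hi' j
          (mem_erase.mpr ⟨fun h => hjT (h ▸ mem_insert_self _ _), hj⟩)
          (fun h => hjT (mem_insert_of_mem h))

/-- The worst-case term equals the optimal value of the dual LP
`min Γ q + ∑ p` s.t. `q + p_j ≥ b_j x_j`, `p ≥ 0`, `q ≥ 0`. -/
theorem stmt2 {ι : Type*} [DecidableEq ι] (N : Finset ι) (b : ι → ℝ)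
    (hb : ∀ j ∈ N, 0 ≤ b j) (Γ : ℕ) (hΓ : Γ ≤ N.card)
    (x : ι → ℝ) (hx : ∀ j ∈ N, x j = 0 ∨ x j = 1) :
    IsLeast {t : ℝ | ∃ p : ι → ℝ, ∃ q : ℝ, (∀ j ∈ N, 0 ≤ p j) ∧ 0 ≤ q ∧
        (∀ j ∈ N, b j * x j ≤ q + p j) ∧ t = (Γ : ℝ) * q + ∑ j ∈ N, p j}
      (robustMax N Γ fun j => b j * x j) := by
  set c : ι → ℝ := fun j => b j * x j with hc_def
  have hc : ∀ j ∈ N, 0 ≤ c j := by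
    intro j hj
    rcases hx j hj with h | h <;> simp [hc_def, h, hb j hj]
  -- lower bound part
  have lb : ∀ t ∈ {t : ℝ | ∃ p : ι → ℝ, ∃ q : ℝ, (∀ j ∈ N, 0 ≤ p j) ∧ 0 ≤ q ∧
      (∀ j ∈ N, c j ≤ q + p j) ∧ t = (Γ : ℝ) * q + ∑ j ∈ N, p j},
      robustMax N Γ c ≤ t := by
    rintro t ⟨p, q, hp, hq, hfeas, rfl⟩
    apply Finset.sup'_le
    intro R hR
    rw [mem_filter, mem_powerset] at hR
    obtain ⟨hRN, hRcard⟩ := hR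
    calc ∑ j ∈ R, c j ≤ ∑ j ∈ R, (q + p j) :=
          Finset.sum_le_sum fun j hj => hfeas j (hRN hj)
      _ = R.card * q + ∑ j ∈ R, p j := by
          rw [Finset.sum_add_distrib, Finset.sum_const, nsmul_eq_mul]
      _ ≤ (Γ : ℝ) * q + ∑ j ∈ N, p j := by
          refine add_le_add (mul_le_mul_of_nonneg_right ?_ hq)
            (Finset.sum_le_sum_of_subset_of_nonneg hRN fun j hj _ => hp j hj)
          exact_mod_cast hRcard
  constructor
  · -- membership
    obtain ⟨T, hTN, hTcard, hTtop⟩ := exists_top c Γ N hΓ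
    -- find a witness (p, q) with value ∑ j ∈ T, c j
    have hmem : (∑ j ∈ T, c j) ∈ {t : ℝ | ∃ p : ι → ℝ, ∃ q : ℝ, (∀ j ∈ N, 0 ≤ p j) ∧ 0 ≤ q ∧
        (∀ j ∈ N, c j ≤ q + p j) ∧ t = (Γ : ℝ) * q + ∑ j ∈ N, p j} := by
      rcases Nat.eq_zero_or_pos Γ with hΓ0 | hΓpos
      · -- Γ = 0 : take q big, p = 0
        have hT0 : T = ∅ := card_eq_zero.mp (hTcard.trans hΓ0)
        by_cases hN : N.Nonempty
        · refine ⟨fun _ => 0, N.sup' hN c, fun j _ => le_refl 0, ?_, ?_, ?_⟩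
          · obtain ⟨i, hi, hie⟩ := Finset.exists_mem_eq_sup' hN c
            rw [hie]; exact hc i hi
          · intro j hj; exact le_add_of_le_of_nonneg (Finset.le_sup' c hj) le_rfl
          · simp [hT0, hΓ0]
        · rw [Finset.not_nonempty_iff_eq_empty] at hN
          exact ⟨fun _ => 0, 0, by simp [hN], le_refl 0, by simp [hN], by simp [hT0, hΓ0, hN]⟩
      · -- Γ ≥ 1 : T nonempty, q = min of c over T
        have hTne : T.Nonempty := card_pos.mp (hTcard ▸ hΓpos)
        set q : ℝ := T.inf' hTne c with hq_def
        have hq0 : 0 ≤ q := by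
          obtain ⟨i, hi, hie⟩ := Finset.exists_mem_eq_inf' hTne c
          rw [hq_def, hie]; exact hc i (hTN hi)
        set p : ι → ℝ := fun j => max (c j - q) 0 with hp_def
        have hpT : ∀ j ∈ T, p j = c j - q := by
          intro j hj
          exact max_eq_left (sub_nonneg.mpr (Finset.inf'_le c hj))
        have hpNT : ∀ j ∈ N, j ∉ T → p j = 0 := by
          intro j hj hjT
          refine max_eq_right (sub_nonpos.mpr ?_)
          exact Finset.le_inf' hTne c fun i hi => hTtop i hi j hj hjT
        refine ⟨p, q, fun j _ => le_max_right _ _, hq0, ?_, ?_⟩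
        · intro j hj
          have : c j - q ≤ p j := le_max_left _ _
          linarith
        · have hsum : ∑ j ∈ N, p j = ∑ j ∈ T, p j :=
            (Finset.sum_subset hTN fun j hj hjT => hpNT j hj hjT).symm
          rw [hsum, Finset.sum_congr rfl hpT, Finset.sum_sub_distrib,
            Finset.sum_const, nsmul_eq_mul, hTcard]
          ring
    have h1 : robustMax N Γ c ≤ ∑ j ∈ T, c j := lb _ hmem
    have h2 : ∑ j ∈ T, c j ≤ robustMax N Γ c := by
      rw [robustMax]
      exact Finset.le_sup' (fun R => ∑ j ∈ R, c j)
        (by rw [mem_filter, mem_powerset]; exact ⟨hTN, hTcard.le⟩)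
    obtain ⟨p, q, h⟩ := hmem
    exact ⟨p, q, h.1, h.2.1, h.2.2.1, by rw [le_antisymm h1 h2]; exact h.2.2.2⟩
  · exact lb
end

section
/- With C and C_l defined as in the robust knapsack decomposition, the robust binary knapsack problem max{ sum_j w_j x_j : x in C } has optimal value equal to the maximum over l in {Gamma, Gamma+1, ..., n-1, n+1} of the ordinary binary knapsack optimal values max{ sum_j w_j x_j : x in C_l }. -/
open Finset

/-- Robust binary knapsack feasible set. -/
def robC (n Γ : ℕ) (d b : ℕ → ℝ) (s : ℝ) : Set (ℕ → ℝ) :=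
  {x | (∀ j ∈ Finset.Icc 1 n, x j = 0 ∨ x j = 1) ∧
    ∑ j ∈ Finset.Icc 1 n, d j * x j
      + robustMax (Finset.Icc 1 n) Γ (fun j => b j * x j) ≤ s}

/-- Nominal knapsack feasible set `C_l`. -/
def nomC (n Γ l : ℕ) (d b : ℕ → ℝ) (s : ℝ) : Set (ℕ → ℝ) :=
  {x | (∀ j ∈ Finset.Icc 1 n, x j = 0 ∨ x j = 1) ∧
    ∑ j ∈ Finset.Icc 1 n, d j * x j
      + ∑ j ∈ Finset.Icc 1 (min l n), (b j - b l) * x j ≤ s - (Γ : ℝ) * b l}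

/-- In any finset of naturals with more than `k` elements there is an element with
exactly `k` elements strictly below it. -/
lemma exists_nth (S : Finset ℕ) : ∀ k, k < S.card → ∃ l ∈ S, (S.filter (· < l)).card = k := by
  intro k
  induction k with
  | zero =>
    intro hk
    have hS : S.Nonempty := Finset.card_pos.mp (by omega)
    refine ⟨S.min' hS, S.min'_mem hS, ?_⟩
    rw [Finset.card_eq_zero, Finset.filter_eq_empty_iff]
    intro j hj
    exact not_lt.mpr (S.min'_le j hj)
  | succ k ih =>
    intro hk
    obtain ⟨l, hlS, hcard⟩ := ih (by omega)
    have hsplit := Finset.card_filter_add_card_filter_not (s := S) (p := (· < l))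
    have hle : S.filter (fun j => ¬ j < l) = insert l (S.filter (fun j => l < j)) := by
      ext j
      simp only [Finset.mem_filter, Finset.mem_insert, not_lt]
      constructor
      · rintro ⟨hj, hlj⟩
        rcases eq_or_lt_of_le hlj with h | h
        · exact Or.inl h.symm
        · exact Or.inr ⟨hj, h⟩
      · rintro (rfl | ⟨hj, hlj⟩)
        · exact ⟨hlS, le_refl _⟩
        · exact ⟨hj, le_of_lt hlj⟩
    have hlnot : l ∉ S.filter (fun j => l < j) := by simp
    have hTcard : (S.filter (fun j => l < j)).card + 1 + k = S.card := by
      rw [hle] at hsplit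
      rw [Finset.card_insert_of_notMem hlnot] at hsplit
      omega
    have hT : (S.filter (fun j => l < j)).Nonempty := Finset.card_pos.mp (by omega)
    refine ⟨(S.filter (fun j => l < j)).min' hT, ?_, ?_⟩
    · exact Finset.mem_of_mem_filter _ ((S.filter (fun j => l < j)).min'_mem hT)
    · have hmem := (S.filter (fun j => l < j)).min'_mem hT
      rw [Finset.mem_filter] at hmem
      have key : S.filter (· < (S.filter (fun j => l < j)).min' hT)
          = insert l (S.filter (· < l)) := by
        ext j
        simp only [Finset.mem_filter, Finset.mem_insert]
        constructor
        · rintro ⟨hj, hjlt⟩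
          rcases lt_trichotomy j l with h | h | h
          · exact Or.inr ⟨hj, h⟩
          · exact Or.inl h
          · exact absurd hjlt (not_lt.mpr
              ((S.filter (fun j => l < j)).min'_le j (Finset.mem_filter.mpr ⟨hj, h⟩)))
        · rintro (rfl | ⟨hj, hjl⟩)
          · exact ⟨hlS, hmem.2⟩
          · exact ⟨hj, lt_trans hjl hmem.2⟩
      rw [key, Finset.card_insert_of_notMem (by simp), hcard]

/-- Converting a weighted sum over an initial segment into a sum over the support. -/
lemma sum_conv (n m' : ℕ) (hm' : m' ≤ n) (x : ℕ → ℝ)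
    (hx01 : ∀ j ∈ Finset.Icc 1 n, x j = 0 ∨ x j = 1) (f : ℕ → ℝ) :
    ∑ j ∈ Finset.Icc 1 m', f j * x j
      = ∑ j ∈ ((Finset.Icc 1 n).filter (fun j => x j = 1)).filter (· ≤ m'), f j := by
  have hset : ((Finset.Icc 1 n).filter (fun j => x j = 1)).filter (· ≤ m')
      = (Finset.Icc 1 m').filter (fun j => x j = 1) := by
    ext j
    simp only [Finset.mem_filter, Finset.mem_Icc]
    constructor
    · rintro ⟨⟨⟨h1, _⟩, h3⟩, h4⟩; exact ⟨⟨h1, h4⟩, h3⟩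
    · rintro ⟨⟨h1, h2⟩, h3⟩; exact ⟨⟨⟨h1, le_trans h2 hm'⟩, h3⟩, h2⟩
  rw [hset, Finset.sum_filter]
  refine Finset.sum_congr rfl fun j hj => ?_
  have hj' : j ∈ Finset.Icc 1 n := by
    rw [Finset.mem_Icc] at hj ⊢; omega
  rcases hx01 j hj' with h | h
  · rw [h, if_neg (by norm_num : ¬(0:ℝ) = 1), mul_zero]
  · rw [h, mul_one, if_pos rfl]

lemma nomC_subset_robC (n Γ : ℕ) (d b : ℕ → ℝ) (s : ℝ)
    (hsort : ∀ j k, 1 ≤ j → j ≤ k → k ≤ n + 1 → b k ≤ b j)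
    (hbn : b (n + 1) = 0) (l : ℕ)
    (hl : l ∈ insert (n + 1) (Finset.Ico Γ n)) :
    nomC n Γ l d b s ⊆ robC n Γ d b s := by
  rintro x ⟨hx01, hxle⟩
  refine ⟨hx01, ?_⟩
  have key : ∀ R ∈ (Finset.Icc 1 n).powerset.filter (fun R => R.card ≤ Γ),
      ∑ j ∈ R, b j * x j
        ≤ (Γ : ℝ) * b l + ∑ j ∈ Finset.Icc 1 (min l n), (b j - b l) * x j := by
    intro R hR
    rw [Finset.mem_filter, Finset.mem_powerset] at hR
    obtain ⟨hRsub, hRcard⟩ := hR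
    rcases Nat.eq_zero_or_pos l with rfl | hl1
    · have hΓ0 : Γ = 0 := by
        rcases Finset.mem_insert.mp hl with h | h
        · omega
        · rw [Finset.mem_Ico] at h; omega
      have hR0 : R = ∅ := Finset.card_eq_zero.mp (by omega)
      have hIcc : Finset.Icc 1 (min 0 n) = ∅ := by
        rw [Nat.min_comm, Nat.min_zero]; rfl
      simp [hR0, hΓ0, hIcc]
    · have hln1 : l ≤ n + 1 := by
        rcases Finset.mem_insert.mp hl with h | h
        · omega
        · rw [Finset.mem_Ico] at h; omega
      have hbl : 0 ≤ b l := hbn ▸ hsort l (n + 1) hl1 hln1 le_rfl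
      have hx0 : ∀ j ∈ Finset.Icc 1 n, 0 ≤ x j := fun j hj => by
        rcases hx01 j hj with h | h <;> rw [h] <;> norm_num
      have hx1 : ∀ j ∈ Finset.Icc 1 n, x j ≤ 1 := fun j hj => by
        rcases hx01 j hj with h | h <;> rw [h] <;> norm_num
    -- main chain
      have step1 : ∑ j ∈ R, b j * x j ≤ ∑ j ∈ R, ((b j - b l) * x j + b l) := by
        refine Finset.sum_le_sum fun j hj => ?_
        have h1 := hx1 j (hRsub hj)
        nlinarith [mul_nonneg hbl (sub_nonneg.mpr h1)]
      have step2 : ∑ j ∈ R, ((b j - b l) * x j + b l)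
          = ∑ j ∈ R, (b j - b l) * x j + (R.card : ℝ) * b l := by
        rw [Finset.sum_add_distrib, Finset.sum_const, nsmul_eq_mul]
      have step3 : (R.card : ℝ) * b l ≤ (Γ : ℝ) * b l :=
        mul_le_mul_of_nonneg_right (Nat.cast_le.mpr hRcard) hbl
      have hsplit := Finset.sum_filter_add_sum_filter_not R (· ≤ min l n)
        (fun j => (b j - b l) * x j)
      have hneg : ∑ j ∈ R.filter (fun j => ¬ j ≤ min l n), (b j - b l) * x j ≤ 0 := by
        apply Finset.sum_nonpos
        intro j hj
        rw [Finset.mem_filter] at hj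
        obtain ⟨hjR, hjgt⟩ := hj
        have hjIcc := Finset.mem_Icc.mp (hRsub hjR)
        have hlj : l < j := by omega
        have hble : b j ≤ b l := hsort l j hl1 (le_of_lt hlj) (by omega)
        exact mul_nonpos_of_nonpos_of_nonneg (by linarith) (hx0 j (hRsub hjR))
      have hsub : R.filter (· ≤ min l n) ⊆ Finset.Icc 1 (min l n) := by
        intro j hj
        rw [Finset.mem_filter] at hj
        have := Finset.mem_Icc.mp (hRsub hj.1)
        rw [Finset.mem_Icc]
        exact ⟨this.1, hj.2⟩
      have step4 : ∑ j ∈ R.filter (· ≤ min l n), (b j - b l) * x j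
          ≤ ∑ j ∈ Finset.Icc 1 (min l n), (b j - b l) * x j := by
        refine Finset.sum_le_sum_of_subset_of_nonneg hsub fun j hj _ => ?_
        have hjIcc := Finset.mem_Icc.mp hj
        have hjn : j ∈ Finset.Icc 1 n := by
          rw [Finset.mem_Icc]; omega
        have hble : b l ≤ b j := hsort j l hjIcc.1 (by omega) hln1
        exact mul_nonneg (by linarith) (hx0 j hjn)
      linarith
  have h2 := Finset.sup'_le (⟨∅, by simp⟩ :
    ((Finset.Icc 1 n).powerset.filter (fun R => R.card ≤ Γ)).Nonempty) _ key
  unfold robustMax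
  linarith

lemma robC_mem_nomC (n Γ : ℕ) (d b : ℕ → ℝ) (s : ℝ)
    (hsort : ∀ j k, 1 ≤ j → j ≤ k → k ≤ n + 1 → b k ≤ b j)
    (hbn : b (n + 1) = 0) (hΓ : Γ ≤ n) (x : ℕ → ℝ)
    (hx : x ∈ robC n Γ d b s) :
    ∃ l ∈ insert (n + 1) (Finset.Ico Γ n), x ∈ nomC n Γ l d b s := by
  obtain ⟨hx01, hxle⟩ := hx
  set S := (Finset.Icc 1 n).filter (fun j => x j = 1) with hS
  have hSsub : S ⊆ Finset.Icc 1 n := Finset.filter_subset _ _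
  have hxS : ∀ j ∈ S, x j = 1 := fun j hj => (Finset.mem_filter.mp hj).2
  have key : ∃ l ∈ insert (n + 1) (Finset.Ico Γ n),
      ∃ R ∈ (Finset.Icc 1 n).powerset.filter (fun R => R.card ≤ Γ),
      (Γ : ℝ) * b l + ∑ j ∈ Finset.Icc 1 (min l n), (b j - b l) * x j
        ≤ ∑ j ∈ R, b j * x j := by
    by_cases hc : S.card ≤ Γ
    · refine ⟨n + 1, Finset.mem_insert_self _ _, S, ?_, ?_⟩
      · rw [Finset.mem_filter, Finset.mem_powerset]; exact ⟨hSsub, hc⟩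
      · have h1 : min (n + 1) n = n := by omega
        rw [h1, sum_conv n n le_rfl x hx01 (fun j => b j - b (n + 1))]
        have h2 : S.filter (· ≤ n) = S :=
          Finset.filter_true_of_mem fun j hj => (Finset.mem_Icc.mp (hSsub hj)).2
        rw [h2, hbn]
        have h3 : ∑ j ∈ S, b j * x j = ∑ j ∈ S, b j :=
          Finset.sum_congr rfl fun j hj => by rw [hxS j hj, mul_one]
        simp [h3]
    · push_neg at hc
      obtain ⟨l₀, hl₀S, hl₀card⟩ := exists_nth S Γ hc
      set R := S.filter (· < l₀) with hR
      have hl₀Icc := Finset.mem_Icc.mp (hSsub hl₀S)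
      have hRsubIcc : R ⊆ Finset.Icc 1 (l₀ - 1) := by
        intro j hj
        rw [hR, Finset.mem_filter] at hj
        have := Finset.mem_Icc.mp (hSsub hj.1)
        rw [Finset.mem_Icc]; omega
      have hΓl₀ : Γ + 1 ≤ l₀ := by
        have h := Finset.card_le_card hRsubIcc
        rw [Nat.card_Icc] at h
        omega
      have hRfeas : R ∈ (Finset.Icc 1 n).powerset.filter (fun R => R.card ≤ Γ) := by
        rw [Finset.mem_filter, Finset.mem_powerset]
        exact ⟨(Finset.filter_subset _ _).trans hSsub, le_of_eq hl₀card⟩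
      have hsumR : ∑ j ∈ R, b j * x j = ∑ j ∈ R, b j :=
        Finset.sum_congr rfl fun j hj => by
          rw [hxS j (Finset.mem_of_mem_filter _ hj), mul_one]
      have hcardR : (R.card : ℝ) = (Γ : ℝ) := by exact_mod_cast congrArg Nat.cast hl₀card
      by_cases hln : l₀ < n
      · refine ⟨l₀, Finset.mem_insert_of_mem (Finset.mem_Ico.mpr ⟨by omega, hln⟩),
          R, hRfeas, ?_⟩
        have h1 : min l₀ n = l₀ := by omega
        rw [h1, sum_conv n l₀ (by omega) x hx01 (fun j => b j - b l₀)]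
        have h2 : S.filter (· ≤ l₀) = insert l₀ R := by
          ext j
          simp only [hR, Finset.mem_filter, Finset.mem_insert]
          constructor
          · rintro ⟨hj, hjle⟩
            rcases eq_or_lt_of_le hjle with h | h
            · exact Or.inl h
            · exact Or.inr ⟨hj, h⟩
          · rintro (rfl | ⟨hj, hjl⟩)
            · exact ⟨hl₀S, le_rfl⟩
            · exact ⟨hj, le_of_lt hjl⟩
        have hl₀notR : l₀ ∉ R := by
          rw [hR, Finset.mem_filter]
          simp
        rw [h2, Finset.sum_insert hl₀notR, hsumR]
        have h3 : ∑ j ∈ R, (b j - b l₀) = ∑ j ∈ R, b j - (R.card : ℝ) * b l₀ := by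
          rw [Finset.sum_sub_distrib, Finset.sum_const, nsmul_eq_mul]
        rw [h3, hcardR]
        ring_nf
        linarith [le_refl (∑ j ∈ R, b j)]
      · have hl₀n : l₀ = n := by omega
        refine ⟨n - 1, Finset.mem_insert_of_mem (Finset.mem_Ico.mpr ⟨by omega, by omega⟩),
          R, hRfeas, ?_⟩
        have h1 : min (n - 1) n = n - 1 := by omega
        rw [h1, sum_conv n (n - 1) (by omega) x hx01 (fun j => b j - b (n - 1))]
        have h2 : S.filter (· ≤ n - 1) = R := by
          ext j
          simp only [hR, Finset.mem_filter]
          constructor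
          · rintro ⟨hj, hjle⟩
            refine ⟨hj, ?_⟩
            have := Finset.mem_Icc.mp (hSsub hj)
            omega
          · rintro ⟨hj, hjlt⟩
            exact ⟨hj, by omega⟩
        rw [h2, hsumR]
        have h3 : ∑ j ∈ R, (b j - b (n - 1)) = ∑ j ∈ R, b j - (R.card : ℝ) * b (n - 1) := by
          rw [Finset.sum_sub_distrib, Finset.sum_const, nsmul_eq_mul]
        rw [h3, hcardR]
        linarith [le_refl (∑ j ∈ R, b j)]
  obtain ⟨l, hl, R, hRmem, hkey⟩ := key
  refine ⟨l, hl, hx01, ?_⟩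
  have hsup : ∑ j ∈ R, b j * x j
      ≤ robustMax (Finset.Icc 1 n) Γ (fun j => b j * x j) := by
    unfold robustMax
    exact Finset.le_sup' (fun R => ∑ j ∈ R, b j * x j) hRmem
  unfold robustMax at hxle
  unfold robustMax at hsup
  linarith

/-- The robust binary knapsack optimal value equals the maximum over
`l ∈ {Γ, …, n-1, n+1}` of the ordinary binary knapsack optimal values. -/
theorem stmt4 (n Γ : ℕ) (w d b : ℕ → ℝ) (s : ℝ)
    (hsort : ∀ j k, 1 ≤ j → j ≤ k → k ≤ n + 1 → b k ≤ b j)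
    (hbn : b (n + 1) = 0)
    (hd : ∀ j ∈ Finset.Icc 1 n, 0 ≤ d j)
    (hΓ : Γ ≤ n) (hs : 0 ≤ s) :
    sSup {t : ℝ | ∃ x ∈ robC n Γ d b s, t = ∑ j ∈ Finset.Icc 1 n, w j * x j} =
      (insert (n + 1) (Finset.Ico Γ n)).sup' ⟨n + 1, Finset.mem_insert_self _ _⟩
        (fun l => sSup {t : ℝ | ∃ x ∈ nomC n Γ l d b s,
          t = ∑ j ∈ Finset.Icc 1 n, w j * x j}) := by
  have hB : ∀ (x : ℕ → ℝ), (∀ j ∈ Finset.Icc 1 n, x j = 0 ∨ x j = 1) →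
      ∑ j ∈ Finset.Icc 1 n, w j * x j ≤ ∑ j ∈ Finset.Icc 1 n, |w j| := by
    intro x hx
    refine Finset.sum_le_sum fun j hj => ?_
    rcases hx j hj with h | h
    · rw [h, mul_zero]; exact abs_nonneg _
    · rw [h, mul_one]; exact le_abs_self _
  have hbddRob : BddAbove {t : ℝ | ∃ x ∈ robC n Γ d b s,
      t = ∑ j ∈ Finset.Icc 1 n, w j * x j} := by
    refine ⟨∑ j ∈ Finset.Icc 1 n, |w j|, ?_⟩
    rintro t ⟨x, hx, rfl⟩
    exact hB x hx.1
  have hbddNom : ∀ l, BddAbove {t : ℝ | ∃ x ∈ nomC n Γ l d b s,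
      t = ∑ j ∈ Finset.Icc 1 n, w j * x j} := by
    intro l
    refine ⟨∑ j ∈ Finset.Icc 1 n, |w j|, ?_⟩
    rintro t ⟨x, hx, rfl⟩
    exact hB x hx.1
  have hzero : (0 : ℝ) ∈ {t : ℝ | ∃ x ∈ robC n Γ d b s,
      t = ∑ j ∈ Finset.Icc 1 n, w j * x j} := by
    refine ⟨fun _ => 0, ⟨fun j _ => Or.inl rfl, ?_⟩, by simp⟩
    have h1 : robustMax (Finset.Icc 1 n) Γ (fun _ : ℕ => (0:ℝ)) = 0 := by
      unfold robustMax
      apply le_antisymm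
      · exact Finset.sup'_le _ _ fun R hR => by simp
      · have h := Finset.le_sup' (f := fun R : Finset ℕ => ∑ _j ∈ R, (0:ℝ))
          (show (∅ : Finset ℕ) ∈ (Finset.Icc 1 n).powerset.filter (fun R => R.card ≤ Γ) by simp)
        simpa using h
    simp only [mul_zero, Finset.sum_const_zero, h1, zero_add, add_zero]
    exact hs
  have hrobNE : Set.Nonempty {t : ℝ | ∃ x ∈ robC n Γ d b s,
      t = ∑ j ∈ Finset.Icc 1 n, w j * x j} := ⟨0, hzero⟩
  apply le_antisymm
  · refine csSup_le hrobNE ?_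
    rintro t ⟨x, hx, rfl⟩
    obtain ⟨l, hl, hxl⟩ := robC_mem_nomC n Γ d b s hsort hbn hΓ x hx
    calc (∑ j ∈ Finset.Icc 1 n, w j * x j)
        ≤ sSup {t : ℝ | ∃ x ∈ nomC n Γ l d b s,
            t = ∑ j ∈ Finset.Icc 1 n, w j * x j} :=
          le_csSup (hbddNom l) ⟨x, hxl, rfl⟩
      _ ≤ _ := Finset.le_sup' (fun l => sSup {t : ℝ | ∃ x ∈ nomC n Γ l d b s,
          t = ∑ j ∈ Finset.Icc 1 n, w j * x j}) hl
  · refine Finset.sup'_le _ _ fun l hl => ?_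
    rcases Set.eq_empty_or_nonempty {t : ℝ | ∃ x ∈ nomC n Γ l d b s,
        t = ∑ j ∈ Finset.Icc 1 n, w j * x j} with he | hne
    · rw [he, Real.sSup_empty]
      exact le_csSup hbddRob hzero
    · refine csSup_le hne ?_
      rintro t ⟨x, hx, rfl⟩
      exact le_csSup hbddRob ⟨x, nomC_subset_robC n Γ d b s hsort hbn l hl hx, rfl⟩
end

section
/- Under the setup of the adjusted dual solution: if (lambda*, mu*) is an optimal dual solution of the restricted master problem with objective value Z_underline = sum_j lambda*_j - sum_i mu*_i, then Z_underline + sum_{i in M} nu*_i, where nu*_i = mu*_i + min{ f_i - xi^i(lambda*), 0 }, is a lower bound on the optimal value of the full linear programming master problem (MP). -/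
open Finset

/-- Early-termination lower bound: if `(λ*, μ*)` is an optimal dual solution of
the restricted master problem with value `Z`, then `Z + ∑ ν*` bounds the full
master problem (MP) from below. -/
theorem stmt8 {ι κ : Type*} [Fintype ι] [Fintype κ] [DecidableEq κ]
    (S : ι → Finset (Finset κ)) (hSempty : ∀ i, ∅ ∈ S i)
    (Rfam : ι → Finset (Finset κ)) (hRsub : ∀ i, Rfam i ⊆ S i)
    (hRempty : ∀ i, ∅ ∈ Rfam i)
    (f : ι → ℝ) (hf : ∀ i, 0 ≤ f i) (c : ι → κ → ℝ)
    (lam : κ → ℝ) (mu : ι → ℝ)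
    -- (λ*, μ*) is feasible for the dual of the restricted master problem
    (hfeas : (∀ j, 0 ≤ lam j) ∧ (∀ i, 0 ≤ mu i) ∧
      ∀ i, ∀ R ∈ Rfam i, ∑ j ∈ R, lam j - mu i ≤ f i + ∑ j ∈ R, c i j)
    -- and optimal among all feasible solutions of that dual
    (hopt : ∀ lam' : κ → ℝ, ∀ mu' : ι → ℝ,
      (∀ j, 0 ≤ lam' j) → (∀ i, 0 ≤ mu' i) →
      (∀ i, ∀ R ∈ Rfam i, ∑ j ∈ R, lam' j - mu' i ≤ f i + ∑ j ∈ R, c i j) →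
      ∑ j, lam' j - ∑ i, mu' i ≤ ∑ j, lam j - ∑ i, mu i)
    (Z : ℝ) (hZ : Z = ∑ j, lam j - ∑ i, mu i)
    (xi : ι → ℝ)
    (hxi : ∀ i, xi i = (S i).sup' ⟨∅, hSempty i⟩ (fun R => ∑ j ∈ R, (lam j - c i j)))
    (nu : ι → ℝ) (hnu : ∀ i, nu i = mu i + min (f i - xi i) 0) :
    ∀ z : ι → Finset κ → ℝ,
      (∀ i R, 0 ≤ z i R) →
      (∀ i, ∑ R ∈ S i, z i R ≤ 1) →
      (∀ j : κ, 1 ≤ ∑ i, ∑ R ∈ (S i).filter (fun R => j ∈ R), z i R) →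
      Z + ∑ i, nu i ≤ ∑ i, ∑ R ∈ S i, (f i + ∑ j ∈ R, c i j) * z i R := by

  intro z hz hz1 hcov
  obtain ⟨hlam, hmu, _⟩ := hfeas
  set muh : ι → ℝ := fun i => max (xi i - f i) 0 with hmuh
  have hmuh0 : ∀ i, 0 ≤ muh i := fun i => le_max_right _ _
  have hfeasfull : ∀ i, ∀ R ∈ S i,
      ∑ j ∈ R, lam j - muh i ≤ f i + ∑ j ∈ R, c i j := by
    intro i R hR
    have h1 : ∑ j ∈ R, (lam j - c i j) ≤ xi i := by
      rw [hxi]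
      exact Finset.le_sup' (f := fun R => ∑ j ∈ R, (lam j - c i j)) hR
    have h2 : xi i - f i ≤ muh i := le_max_left _ _
    rw [Finset.sum_sub_distrib] at h1
    linarith
  have hval : Z + ∑ i, nu i = ∑ j, lam j - ∑ i, muh i := by
    rw [hZ]
    have hv : ∀ i, nu i = mu i - muh i := by
      intro i
      have hmi : muh i = max (xi i - f i) 0 := rfl
      rw [hnu, hmi]
      rcases le_total (f i - xi i) 0 with h | h
      · rw [min_eq_left h, max_eq_left (by linarith)]; ring
      · rw [min_eq_right h, max_eq_right (by linarith)]; ring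
    simp only [hv, Finset.sum_sub_distrib]
    ring
  rw [hval]
  have key1 : ∑ j, lam j ≤ ∑ i, ∑ R ∈ S i, (∑ j ∈ R, lam j) * z i R := by
    calc ∑ j, lam j
        ≤ ∑ j, lam j * (∑ i, ∑ R ∈ (S i).filter (fun R => j ∈ R), z i R) := by
          apply Finset.sum_le_sum; intro j _
          have := hcov j
          nlinarith [hlam j]
      _ = ∑ j, ∑ i, ∑ R ∈ S i, (if j ∈ R then lam j * z i R else 0) := by
          refine Finset.sum_congr rfl fun j _ => ?_
          rw [Finset.mul_sum]
          refine Finset.sum_congr rfl fun i _ => ?_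
          rw [Finset.mul_sum, Finset.sum_filter]
      _ = ∑ i, ∑ R ∈ S i, (∑ j ∈ R, lam j) * z i R := by
          rw [Finset.sum_comm]
          refine Finset.sum_congr rfl fun i _ => ?_
          rw [Finset.sum_comm]
          refine Finset.sum_congr rfl fun R _ => ?_
          rw [Finset.sum_ite_mem, Finset.univ_inter, Finset.sum_mul]
  have key2 : ∑ i, muh i * (∑ R ∈ S i, z i R) ≤ ∑ i, muh i := by
    apply Finset.sum_le_sum; intro i _
    exact mul_le_of_le_one_right (hmuh0 i) (hz1 i)
  have key3 : ∑ i, ∑ R ∈ S i, (∑ j ∈ R, lam j - muh i) * z i R ≤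
      ∑ i, ∑ R ∈ S i, (f i + ∑ j ∈ R, c i j) * z i R := by
    apply Finset.sum_le_sum; intro i _
    apply Finset.sum_le_sum; intro R hR
    exact mul_le_mul_of_nonneg_right (hfeasfull i R hR) (hz i R)
  have expand : ∑ i, ∑ R ∈ S i, (∑ j ∈ R, lam j - muh i) * z i R =
      (∑ i, ∑ R ∈ S i, (∑ j ∈ R, lam j) * z i R) -
      ∑ i, muh i * (∑ R ∈ S i, z i R) := by
    rw [← Finset.sum_sub_distrib]
    refine Finset.sum_congr rfl fun i _ => ?_
    rw [Finset.mul_sum, ← Finset.sum_sub_distrib]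
    refine Finset.sum_congr rfl fun R _ => ?_
    ring
  linarith
end

section
/- Fix i in M and j in N with S^{ij} = { R in S^i : j in R } nonempty. Let (lambda*, mu*) be feasible for DMP and let xi^{ij} = max_{R in S^{ij}} sum_{k in R} (lambda*_k - c_{ik}). Set delta*_{ij} = -xi^{ij} + f_i + mu*_i. Then (lambda*, mu*, delta*_{ij}) is feasible for the dual of MP augmented with the coupling constraint -x_{ij} + sum_{R in S^{ij}} z_R^i = 0, x_{ij} >= 0; that is: delta*_{ij} >= 0, delta*_{ij} + sum_{k in R} lambda*_k - mu*_i <= c_R^i for all R in S^{ij}, and sum_{k in R} lambda*_k - mu*_i <= c_R^i for all R in S^i \ S^{ij}. -/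
open Finset

/-- Proposition 4: the reduced cost `δ*_{ij} = -ξ^{ij} + f_i + μ*_i` yields a
feasible dual solution of MP augmented with the coupling constraint for
`x_{ij}`. -/
theorem stmt9 {ι κ : Type*} [DecidableEq κ]
    (S : ι → Finset (Finset κ))
    (f : ι → ℝ) (c : ι → κ → ℝ)
    (lam : κ → ℝ) (mu : ι → ℝ)
    (hlam : ∀ k, 0 ≤ lam k) (hmu : ∀ i', 0 ≤ mu i')
    (hfeas : ∀ i', ∀ R ∈ S i', ∑ k ∈ R, lam k - mu i' ≤ f i' + ∑ k ∈ R, c i' k)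
    (i : ι) (j : κ)
    (hne : ((S i).filter (fun R => j ∈ R)).Nonempty)
    (xiij : ℝ)
    (hxiij : xiij = ((S i).filter (fun R => j ∈ R)).sup' hne
      (fun R => ∑ k ∈ R, (lam k - c i k)))
    (delta : ℝ) (hdelta : delta = -xiij + f i + mu i) :
    0 ≤ delta ∧
      (∀ R ∈ (S i).filter (fun R => j ∈ R),
        delta + ∑ k ∈ R, lam k - mu i ≤ f i + ∑ k ∈ R, c i k) ∧
      (∀ R ∈ S i, j ∉ R → ∑ k ∈ R, lam k - mu i ≤ f i + ∑ k ∈ R, c i k) := by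
  have key : ∀ R ∈ (S i).filter (fun R => j ∈ R),
      ∑ k ∈ R, (lam k - c i k) ≤ f i + mu i := by
    intro R hR
    have hR' : R ∈ S i := (mem_filter.mp hR).1
    have := hfeas i R hR'
    have hsum : ∑ k ∈ R, (lam k - c i k) = ∑ k ∈ R, lam k - ∑ k ∈ R, c i k :=
      Finset.sum_sub_distrib lam (c i)
    linarith
  refine ⟨?_, ?_, ?_⟩
  · obtain ⟨R0, hR0, hval⟩ := Finset.exists_mem_eq_sup' hne
      (fun R => ∑ k ∈ R, (lam k - c i k))
    have := key R0 hR0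
    rw [hdelta, hxiij, hval]
    linarith
  · intro R hR
    have hle : ∑ k ∈ R, (lam k - c i k) ≤ xiij := by
      rw [hxiij]; exact Finset.le_sup' (fun R => ∑ k ∈ R, (lam k - c i k)) hR
    have hsum : ∑ k ∈ R, (lam k - c i k) = ∑ k ∈ R, lam k - ∑ k ∈ R, c i k :=
      Finset.sum_sub_distrib lam (c i)
    rw [hdelta]
    linarith
  · intro R hR _
    exact hfeas i R hR
end

section
/- Fix i in M. Let (lambda*, mu*) be feasible for DMP with xi^i = max_{R in S^i} sum_{k in R}(lambda*_k - c_{ik}), and set rho*_i = -xi^i + f_i + mu*_i. Then rho*_i >= 0 and rho*_i + sum_{k in R} lambda*_k - mu*_i <= c_R^i for all R in S^i; i.e., (lambda*, mu*, rho*_i) is feasible for the dual of MP augmented with the coupling constraint -y_i + sum_{R in S^i} z_R^i = 0, y_i >= 0. -/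
open Finset

/-- Proposition 5: the reduced cost `ρ*_i = -ξ^i + f_i + μ*_i` of the
facility-open variable `y_i` yields a feasible dual solution of MP augmented
with the coupling constraint for `y_i`. -/
theorem stmt10 {ι κ : Type*}
    (S : ι → Finset (Finset κ)) (hSempty : ∀ i', ∅ ∈ S i')
    (f : ι → ℝ) (c : ι → κ → ℝ)
    (lam : κ → ℝ) (mu : ι → ℝ)
    (hlam : ∀ k, 0 ≤ lam k) (hmu : ∀ i', 0 ≤ mu i')
    (hfeas : ∀ i', ∀ R ∈ S i', ∑ k ∈ R, lam k - mu i' ≤ f i' + ∑ k ∈ R, c i' k)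
    (i : ι) (xi : ℝ)
    (hxi : xi = (S i).sup' ⟨∅, hSempty i⟩ (fun R => ∑ k ∈ R, (lam k - c i k)))
    (rho : ℝ) (hrho : rho = -xi + f i + mu i) :
    0 ≤ rho ∧
      ∀ R ∈ S i, rho + ∑ k ∈ R, lam k - mu i ≤ f i + ∑ k ∈ R, c i k := by
  subst hrho
  have hxile : xi ≤ f i + mu i := by
    rw [hxi]
    apply Finset.sup'_le
    intro R hR
    have := hfeas i R hR
    rw [Finset.sum_sub_distrib]
    linarith
  refine ⟨by linarith, fun R hR => ?_⟩
  have hle : ∑ k ∈ R, (lam k - c i k) ≤ xi := hxi ▸ Finset.le_sup' (fun R => ∑ k ∈ R, (lam k - c i k)) hR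
  rw [Finset.sum_sub_distrib] at hle
  linarith
end

section
/- The LP relaxation bound of the allocation-based formulation AP is at least as large as the LP relaxation bound of the compact robust formulation RP1 (and hence of RP2): Z_LP(AP) >= Z_LP(RP1) = Z_LP(RP2). -/
open Finset
open scoped Classical

theorem swapL {κ : Type*} [Fintype κ] [DecidableEq κ] (S : Finset (Finset κ)) (w : κ → ℝ)
    (z : Finset κ → ℝ) (J : Finset κ) :
    ∑ j ∈ J, w j * ∑ R ∈ S.filter (fun R => j ∈ R), z R
      = ∑ R ∈ S, (∑ j ∈ J.filter (fun j => j ∈ R), w j) * z R := by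
  simp only [Finset.mul_sum, Finset.sum_mul, Finset.sum_filter, mul_ite, ite_mul,
    mul_zero, zero_mul]
  rw [Finset.sum_comm]

theorem keyq {κ : Type*} [Fintype κ] [DecidableEq κ] (a : κ → ℝ) (ha : ∀ j, 0 ≤ a j) (Γ : ℕ) :
    ∃ q : ℝ, 0 ≤ q ∧ ∃ T : Finset κ, T.card ≤ Γ ∧
      ∑ j, max (a j - q) 0 + (Γ : ℝ) * q ≤ ∑ j ∈ T, a j := by
  set S := Finset.univ.powerset.filter (fun R : Finset κ => R.card ≤ Γ) with hSdef
  have hSne : S.Nonempty := ⟨∅, by simp [hSdef]⟩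
  obtain ⟨T, hTS, hTmax⟩ := S.exists_max_image (fun R => ∑ j ∈ R, a j) hSne
  have hTcard : T.card ≤ Γ := (Finset.mem_filter.1 hTS).2
  by_cases hTu : T = Finset.univ
  · refine ⟨0, le_refl _, T, hTcard, ?_⟩
    simp only [sub_zero, mul_zero, add_zero]
    rw [hTu]
    apply le_of_eq
    exact Finset.sum_congr rfl (fun j _ => max_eq_left (ha j))
  · have hcne : (Finset.univ \ T).Nonempty := by
      rw [Finset.sdiff_nonempty]; exact fun h => hTu (Finset.univ_subset_iff.1 h)
    set q := (Finset.univ \ T).sup' hcne a with hq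
    obtain ⟨j0, hj0, hj0q⟩ := Finset.exists_mem_eq_sup' hcne a
    have hj0T : j0 ∉ T := (Finset.mem_sdiff.1 hj0).2
    have hq0 : 0 ≤ q := le_trans (ha j0) (Finset.le_sup' a hj0)
    -- every element of T has a value ≥ q
    have hTge : ∀ j ∈ T, q ≤ a j := by
      intro j hj
      by_contra hlt
      push_neg at hlt
      have hT' : insert j0 (T.erase j) ∈ S := by
        rw [hSdef, Finset.mem_filter]
        refine ⟨Finset.mem_powerset.2 (Finset.subset_univ _), ?_⟩
        calc (insert j0 (T.erase j)).card ≤ (T.erase j).card + 1 := Finset.card_insert_le _ _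
          _ ≤ T.card := by
              have h1 : 1 ≤ T.card := Finset.card_pos.2 ⟨j, hj⟩
              rw [Finset.card_erase_of_mem hj]; omega
          _ ≤ Γ := hTcard
      have hsum : ∑ k ∈ insert j0 (T.erase j), a k = a j0 + (∑ k ∈ T, a k - a j) := by
        rw [Finset.sum_insert (fun h => hj0T (Finset.erase_subset _ _ h)),
          Finset.sum_erase_eq_sub hj]
      have := hTmax _ hT'
      have hqj0 : q = a j0 := hq.trans hj0q
      rw [hsum] at this
      linarith
    have houtle : ∀ j, j ∉ T → a j ≤ q := fun j hj =>
      Finset.le_sup' a (Finset.mem_sdiff.2 ⟨Finset.mem_univ _, hj⟩)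
    have hsplit : ∑ j, max (a j - q) 0 = ∑ j ∈ T, a j - T.card * q := by
      rw [← Finset.sum_subset (Finset.subset_univ T)
        (f := fun j => max (a j - q) 0) (by
          intro j _ hj; exact max_eq_right (by linarith [houtle j hj]))]
      rw [Finset.sum_congr rfl (fun j hj => max_eq_left (by linarith [hTge j hj]) :
        ∀ j ∈ T, max (a j - q) 0 = a j - q), Finset.sum_sub_distrib,
        Finset.sum_const, nsmul_eq_mul]
    refine ⟨q, hq0, T, hTcard, ?_⟩
    rw [hsplit]
    rcases lt_or_eq_of_le hTcard with hlt | heq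
    · -- then q = 0
      have : q ≤ 0 := by
        have hT' : insert j0 T ∈ S := by
          rw [hSdef, Finset.mem_filter]
          refine ⟨Finset.mem_powerset.2 (Finset.subset_univ _), ?_⟩
          calc (insert j0 T).card ≤ T.card + 1 := Finset.card_insert_le _ _
            _ ≤ Γ := by omega
        have := hTmax _ hT'
        have hqj0 : q = a j0 := hq.trans hj0q
        rw [Finset.sum_insert hj0T] at this
        linarith
      have hq' : q = 0 := le_antisymm this hq0
      rw [hq']; ring_nf; simp
    · rw [heq]; ring_nf; simp [le_refl]

/-- The LP bound of the allocation formulation AP dominates the LP bound of the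
compact robust formulation RP1, whose LP bound coincides with that of the
Bertsimas–Sim reformulation RP2. -/
theorem stmt14 {ι κ : Type*} [Fintype ι] [Fintype κ] [DecidableEq κ]
    (c : ι → κ → ℝ) (f : ι → ℝ) (s : ι → ℝ) (d b : κ → ℝ) (Γ : ι → ℕ)
    (hd : ∀ j, 0 ≤ d j) (hb : ∀ j, 0 ≤ b j) (hs : ∀ i, 0 ≤ s i)
    (hc : ∀ i j, 0 ≤ c i j) (hf : ∀ i, 0 ≤ f i)
    (Sfin : ι → Finset (Finset κ))
    (hS : ∀ i, Sfin i = Finset.univ.powerset.filter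
      (fun R => ∑ j ∈ R, d j + robustMax R (Γ i) b ≤ s i))
    (APval RP1val RP2val : Set ℝ)
    (hAP : APval = {t : ℝ | ∃ z : ι → Finset κ → ℝ, ∃ v : ι → ℝ,
      (∀ i R, 0 ≤ z i R) ∧ (∀ i, 0 ≤ v i) ∧
      (∀ j : κ, ∑ i, ∑ R ∈ (Sfin i).filter (fun R => j ∈ R), z i R = 1) ∧
      (∀ i, ∑ R ∈ Sfin i, z i R + v i = 1) ∧
      t = ∑ i, ∑ R ∈ Sfin i, (f i + ∑ j ∈ R, c i j) * z i R})
    (hRP1 : RP1val = {t : ℝ | ∃ x : ι → κ → ℝ, ∃ y : ι → ℝ,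
      (∀ i j, 0 ≤ x i j ∧ x i j ≤ 1) ∧ (∀ i, 0 ≤ y i ∧ y i ≤ 1) ∧
      (∀ j : κ, ∑ i, x i j = 1) ∧ (∀ i j, x i j ≤ y i) ∧
      (∀ i, ∀ R : Finset κ, R.card ≤ Γ i →
        ∑ j, d j * x i j + ∑ j ∈ R, b j * x i j ≤ s i * y i) ∧
      t = ∑ i, ∑ j, c i j * x i j + ∑ i, f i * y i})
    (hRP2 : RP2val = {t : ℝ | ∃ x : ι → κ → ℝ, ∃ y : ι → ℝ,
      ∃ p : ι → κ → ℝ, ∃ q : ι → ℝ,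
      (∀ i j, 0 ≤ x i j ∧ x i j ≤ 1) ∧ (∀ i, 0 ≤ y i ∧ y i ≤ 1) ∧
      (∀ j : κ, ∑ i, x i j = 1) ∧ (∀ i j, x i j ≤ y i) ∧
      (∀ i j, 0 ≤ p i j) ∧ (∀ i, 0 ≤ q i) ∧
      (∀ i j, b j * x i j ≤ q i + p i j) ∧
      (∀ i, ∑ j, d j * x i j + ∑ j, p i j + (Γ i : ℝ) * q i ≤ s i * y i) ∧
      t = ∑ i, ∑ j, c i j * x i j + ∑ i, f i * y i}) :
    (∀ t ∈ APval, ∃ t' ∈ RP1val, t' ≤ t) ∧ RP1val = RP2val := by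
  constructor
  · -- AP dominates RP1
    intro t ht
    rw [hAP] at ht
    obtain ⟨z, v, hz0, hv0, hassign, hconv, htval⟩ := ht
    refine ⟨t, ?_, le_refl t⟩
    rw [hRP1]
    set x : ι → κ → ℝ := fun i j => ∑ R ∈ (Sfin i).filter (fun R => j ∈ R), z i R with hxdef
    set y : ι → ℝ := fun i => ∑ R ∈ Sfin i, z i R with hydef
    have hx0 : ∀ i j, 0 ≤ x i j := fun i j => Finset.sum_nonneg fun R _ => hz0 i R
    have hy0 : ∀ i, 0 ≤ y i := fun i => Finset.sum_nonneg fun R _ => hz0 i R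
    have hxy : ∀ i j, x i j ≤ y i := fun i j =>
      Finset.sum_le_sum_of_subset_of_nonneg (Finset.filter_subset _ _)
        (fun R _ _ => hz0 i R)
    have hass : ∀ j : κ, ∑ i, x i j = 1 := hassign
    have hx1 : ∀ i j, x i j ≤ 1 := by
      intro i j
      rw [← hass j]
      exact Finset.single_le_sum (f := fun i' => x i' j) (fun i' _ => hx0 i' j)
        (Finset.mem_univ i)
    have hy1 : ∀ i, y i ≤ 1 := fun i => by
      have := hconv i; have := hv0 i
      simp only [hydef] at *
      linarith
    have hxswap : ∀ (i : ι) (w : κ → ℝ) (J : Finset κ),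
        ∑ j ∈ J, w j * x i j = ∑ R ∈ Sfin i, (∑ j ∈ J.filter (fun j => j ∈ R), w j) * z i R :=
      fun i w J => swapL (Sfin i) w (z i) J
    refine ⟨x, y, fun i j => ⟨hx0 i j, hx1 i j⟩, fun i => ⟨hy0 i, hy1 i⟩, hass, hxy, ?_, ?_⟩
    · -- robust capacity
      intro i R0 hR0
      have e1 : ∑ j, d j * x i j = ∑ R ∈ Sfin i, (∑ j ∈ R, d j) * z i R := by
        rw [hxswap i d Finset.univ]
        refine Finset.sum_congr rfl fun R _ => ?_
        rw [Finset.filter_mem_eq_inter, Finset.univ_inter]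
      have e2 : ∑ j ∈ R0, b j * x i j = ∑ R ∈ Sfin i, (∑ j ∈ R0 ∩ R, b j) * z i R := by
        rw [hxswap i b R0]
        refine Finset.sum_congr rfl fun R _ => ?_
        rw [Finset.filter_mem_eq_inter]
      rw [e1, e2, ← Finset.sum_add_distrib]
      have ey : s i * y i = ∑ R ∈ Sfin i, s i * z i R := by
        simp only [hydef]; rw [Finset.mul_sum]
      rw [ey]
      refine Finset.sum_le_sum fun R hR => ?_
      rw [← add_mul]
      refine mul_le_mul_of_nonneg_right ?_ (hz0 i R)
      have hmem := hR
      rw [hS i, Finset.mem_filter] at hmem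
      have hcapR : ∑ j ∈ R, d j + robustMax R (Γ i) b ≤ s i := hmem.2
      have hsub : ∑ j ∈ R0 ∩ R, b j ≤ robustMax R (Γ i) b := by
        refine Finset.le_sup' (fun R' => ∑ j ∈ R', b j) ?_
        rw [Finset.mem_filter, Finset.mem_powerset]
        exact ⟨Finset.inter_subset_right,
          le_trans (Finset.card_le_card Finset.inter_subset_left) hR0⟩
      linarith
    · -- objective equality
      rw [htval]
      have e1 : ∀ i, ∑ j, c i j * x i j = ∑ R ∈ Sfin i, (∑ j ∈ R, c i j) * z i R := by
        intro i
        rw [hxswap i (c i) Finset.univ]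
        refine Finset.sum_congr rfl fun R _ => ?_
        rw [Finset.filter_mem_eq_inter, Finset.univ_inter]
      have e2 : ∀ i, f i * y i = ∑ R ∈ Sfin i, f i * z i R := by
        intro i; simp only [hydef]; rw [Finset.mul_sum]
      rw [Finset.sum_congr rfl fun i _ => e1 i, Finset.sum_congr rfl fun i _ => e2 i,
        ← Finset.sum_add_distrib]
      refine Finset.sum_congr rfl fun i _ => ?_
      rw [← Finset.sum_add_distrib]
      refine Finset.sum_congr rfl fun R _ => ?_
      ring
  · -- RP1 = RP2
    rw [hRP1, hRP2]
    ext t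
    simp only [Set.mem_setOf_eq]
    constructor
    · rintro ⟨x, y, hx, hy, hass, hxy, hcap, htv⟩
      have H : ∀ i, ∃ q : ℝ, 0 ≤ q ∧ ∃ T : Finset κ, T.card ≤ Γ i ∧
          ∑ j, max (b j * x i j - q) 0 + (Γ i : ℝ) * q ≤ ∑ j ∈ T, b j * x i j :=
        fun i => keyq (fun j => b j * x i j) (fun j => mul_nonneg (hb j) (hx i j).1) (Γ i)
      choose q hq0 T hTc hTb using H
      refine ⟨x, y, fun i j => max (b j * x i j - q i) 0, q, hx, hy, hass, hxy,
        fun i j => le_max_right _ _, hq0, ?_, ?_, htv⟩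
      · intro i j
        have := le_max_left (b j * x i j - q i) 0
        linarith
      · intro i
        have h1 := hcap i (T i) (hTc i)
        have h2 := hTb i
        linarith
    · rintro ⟨x, y, p, q, hx, hy, hass, hxy, hp0, hq0, hpq, hcap, htv⟩
      refine ⟨x, y, hx, hy, hass, hxy, ?_, htv⟩
      intro i R hR
      have h1 : ∑ j ∈ R, b j * x i j ≤ ∑ j ∈ R, (q i + p i j) :=
        Finset.sum_le_sum fun j _ => hpq i j
      have h2 : ∑ j ∈ R, (q i + p i j) = (R.card : ℝ) * q i + ∑ j ∈ R, p i j := by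
        rw [Finset.sum_add_distrib, Finset.sum_const, nsmul_eq_mul]
      have h3 : ∑ j ∈ R, p i j ≤ ∑ j, p i j :=
        Finset.sum_le_sum_of_subset_of_nonneg (Finset.subset_univ R) (fun j _ _ => hp0 i j)
      have h4 : (R.card : ℝ) * q i ≤ (Γ i : ℝ) * q i :=
        mul_le_mul_of_nonneg_right (Nat.cast_le.2 hR) (hq0 i)
      have h5 := hcap i
      linarith
end

section
/- For fixed binary x : N -> {0,1}, the Bertsimas-Sim reformulated constraint system is exactly equivalent to the robust constraint: there exist p_j >= 0 (j in N) and q >= 0 with sum_j d_j x_j + sum_j p_j + Gamma q <= s and q + p_j >= b_j x_j for all j, if and only if sum_j d_j x_j + max_{R subset N, |R| <= Gamma} sum_{j in R} b_j x_j <= s. -/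
open Finset

/-- For a fixed binary `x`, the Bertsimas–Sim auxiliary system is satisfiable
iff the robust constraint holds. -/
theorem stmt15 {ι : Type*} [DecidableEq ι] (N : Finset ι) (d b : ι → ℝ)
    (hd : ∀ j ∈ N, 0 ≤ d j) (hb : ∀ j ∈ N, 0 ≤ b j)
    (Γ : ℕ) (hΓ : Γ ≤ N.card) (s : ℝ)
    (x : ι → ℝ) (hx : ∀ j ∈ N, x j = 0 ∨ x j = 1) :
    (∃ p : ι → ℝ, ∃ q : ℝ, (∀ j ∈ N, 0 ≤ p j) ∧ 0 ≤ q ∧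
        (∀ j ∈ N, b j * x j ≤ q + p j) ∧
        ∑ j ∈ N, d j * x j + ∑ j ∈ N, p j + (Γ : ℝ) * q ≤ s) ↔
      ∑ j ∈ N, d j * x j + robustMax N Γ (fun j => b j * x j) ≤ s := by
  set v : ι → ℝ := fun j => b j * x j with hv
  have hv0 : ∀ j ∈ N, 0 ≤ v j := fun j hj =>
    mul_nonneg (hb j hj) (by rcases hx j hj with h | h <;> simp [h])
  constructor
  · rintro ⟨p, q, hp, hq, hpq, hsum⟩
    have hM : robustMax N Γ v ≤ ∑ j ∈ N, p j + (Γ : ℝ) * q := by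
      apply Finset.sup'_le
      intro R hR
      simp only [Finset.mem_filter, Finset.mem_powerset] at hR
      obtain ⟨hRN, hRc⟩ := hR
      have h1 : ∑ j ∈ R, v j ≤ ∑ j ∈ R, (q + p j) :=
        Finset.sum_le_sum fun j hj => hpq j (hRN hj)
      have h2 : ∑ j ∈ R, (q + p j) = (R.card : ℝ) * q + ∑ j ∈ R, p j := by
        rw [Finset.sum_add_distrib, Finset.sum_const, nsmul_eq_mul]
      have h3 : (R.card : ℝ) * q ≤ (Γ : ℝ) * q :=
        mul_le_mul_of_nonneg_right (by exact_mod_cast hRc) hq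
      have h4 : ∑ j ∈ R, p j ≤ ∑ j ∈ N, p j :=
        Finset.sum_le_sum_of_subset_of_nonneg hRN fun j hj _ => hp j hj
      linarith
    linarith
  · intro hs
    rcases Nat.eq_zero_or_pos Γ with hΓ0 | hΓpos
    · -- Γ = 0 : take q large, p = 0
      refine ⟨fun _ => 0, ∑ j ∈ N, v j, fun j _ => le_rfl,
        Finset.sum_nonneg hv0, fun j hj => ?_, ?_⟩
      · have := Finset.single_le_sum hv0 hj
        simpa using this
      · have h0 : (0 : ℝ) ≤ robustMax N Γ v := by
          have hmem : (∅ : Finset ι) ∈ N.powerset.filter fun R => R.card ≤ Γ := by simp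
          have h := Finset.le_sup' (fun R => ∑ j ∈ R, v j) hmem
          rw [robustMax]
          simpa using h
        simp only [hΓ0]
        push_cast
        simpa using le_trans (by linarith) hs
    · -- Γ > 0 : pick a maximizing subset S of size Γ
      obtain ⟨S₀, hS₀N, hS₀c⟩ := Finset.exists_subset_card_eq hΓ
      have hne : (N.powerset.filter fun R => R.card = Γ).Nonempty :=
        ⟨S₀, by simp [hS₀N, hS₀c]⟩
      obtain ⟨S, hSmem, hSmax⟩ :=
        Finset.exists_max_image _ (fun R => ∑ j ∈ R, v j) hne
      simp only [Finset.mem_filter, Finset.mem_powerset] at hSmem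
      obtain ⟨hSN, hSc⟩ := hSmem
      have hSne : S.Nonempty := Finset.card_pos.mp (hSc ▸ hΓpos)
      set q : ℝ := S.inf' hSne v with hqdef
      have hq0 : 0 ≤ q := Finset.le_inf' hSne v fun i hi => hv0 i (hSN hi)
      have hqle : ∀ i ∈ S, q ≤ v i := fun i hi => Finset.inf'_le v hi
      have hkey : ∀ j ∈ N, j ∉ S → v j ≤ q := by
        intro j hjN hjS
        rw [hqdef, Finset.le_inf'_iff]
        intro i hiS
        by_contra h
        push_neg at h
        have hji : j ∉ S.erase i := fun hmem => hjS (Finset.mem_of_mem_erase hmem)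
        have hcard : (insert j (S.erase i)).card = Γ := by
          rw [Finset.card_insert_of_notMem hji, Finset.card_erase_of_mem hiS, hSc]
          omega
        have hsub : insert j (S.erase i) ⊆ N := by
          intro k hk
          rcases Finset.mem_insert.mp hk with rfl | hk
          · exact hjN
          · exact hSN (Finset.mem_of_mem_erase hk)
        have hsum' : ∑ k ∈ insert j (S.erase i), v k = ∑ k ∈ S, v k - v i + v j := by
          rw [Finset.sum_insert hji, Finset.sum_erase_eq_sub hiS]; ring
        have := hSmax (insert j (S.erase i)) (by
          simp only [Finset.mem_filter, Finset.mem_powerset]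
          exact ⟨hsub, hcard⟩)
        rw [hsum'] at this
        linarith
      refine ⟨fun j => max (v j - q) 0, q, fun j _ => le_max_right _ _, hq0,
        fun j hj => ?_, ?_⟩
      · have := le_max_left (v j - q) 0
        simp only [hv] at *
        linarith
      · have hpsum : ∑ j ∈ N, max (v j - q) 0 = ∑ j ∈ S, v j - (Γ : ℝ) * q := by
          have h1 : ∑ j ∈ N, max (v j - q) 0 = ∑ j ∈ S, max (v j - q) 0 := by
            refine (Finset.sum_subset hSN fun j hj hjS => ?_).symm
            have := hkey j hj hjS
            simp [max_eq_right, sub_nonpos.mpr this]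
          have h2 : ∑ j ∈ S, max (v j - q) 0 = ∑ j ∈ S, (v j - q) :=
            Finset.sum_congr rfl fun j hj => max_eq_left (by linarith [hqle j hj])
          rw [h1, h2, Finset.sum_sub_distrib, Finset.sum_const, hSc, nsmul_eq_mul]
        have hSM : ∑ j ∈ S, v j ≤ robustMax N Γ v := by
          refine Finset.le_sup' (fun R => ∑ j ∈ R, v j) ?_
          simp only [Finset.mem_filter, Finset.mem_powerset]
          exact ⟨hSN, hSc.le⟩
        rw [hpsum]
        linarith
end
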